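/- Let n, r be positive integers, a_1 ∈ {0,…,n−1}, a_2 ∈ {0,…,r−1}. Then (as an identity in ℂ): |T_{a_1,a_2}(n,r)| = (1/(nr)) ∑_{d=1}^{n} c_d(a_1)·r^{n/d}·gcd(r,d)·𝟙{d | n}·𝟙{gcd(r,d) | a_2}. -/

import Mathlib

open scoped Classical
open Finset

/-- `e(x) = exp(2πi x)` -/
noncomputable def expu (x : ℝ) : ℂ := Complex.exp (2 * Real.pi * Complex.I * x)

/-- Ramanujan's sum `c_d(a)`. -/
noncomputable def ramanujan (d a : ℕ) : ℂ :=
  ∑ j ∈ (Finset.Icc 1 d).filter (fun j => Nat.gcd j d = 1), expu (((a : ℝ) * (j : ℝ)) / (d : ℝ))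

/-- `γ(x) = ∑_{i=1}^{n-1} i·𝟙{x_i > x_{i+1}}` (1-indexed). -/
noncomputable def gam {n r : ℕ} (x : Fin n → Fin r) : ℕ :=
  ∑ i : Fin n, if h : (i : ℕ) + 1 < n then
      (if (x ⟨(i : ℕ) + 1, h⟩ : ℕ) < (x i : ℕ) then (i : ℕ) + 1 else 0) else 0

/-- `σ(x) = ∑ x_i`. -/
noncomputable def sig {n r : ℕ} (x : Fin n → Fin r) : ℕ := ∑ i : Fin n, (x i : ℕ)

noncomputable def E (m : ℕ) (k : ℤ) : ℂ := expu ((k : ℝ) / (m : ℝ))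

lemma expu_add (x y : ℝ) : expu (x + y) = expu x * expu y := by
  unfold expu
  rw [← Complex.exp_add]
  congr 1
  push_cast
  ring

lemma expu_int (k : ℤ) : expu (k : ℝ) = 1 := by
  unfold expu
  have : (2 * Real.pi * Complex.I * ((k:ℝ):ℂ)) = (k : ℂ) * (2 * Real.pi * Complex.I) := by
    push_cast; ring
  rw [this, Complex.exp_int_mul_two_pi_mul_I]

lemma E_add (m : ℕ) (a b : ℤ) : E m (a + b) = E m a * E m b := by
  unfold E
  rw [← expu_add]
  congr 1
  push_cast
  ring

lemma E_zero (m : ℕ) : E m 0 = 1 := by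
  unfold E expu
  norm_num

lemma E_mul_self (m : ℕ) (c : ℤ) : E m (m * c) = 1 := by
  rcases Nat.eq_zero_or_pos m with h | h
  · subst h; unfold E expu; norm_num
  · unfold E
    have : ((m * c : ℤ) : ℝ) / (m : ℝ) = (c : ℝ) := by
      have : (m : ℝ) ≠ 0 := by positivity
      field_simp
      simp
    rw [this, expu_int]

lemma E_congr {m : ℕ} {a b : ℤ} (h : (m : ℤ) ∣ b - a) : E m a = E m b := by
  obtain ⟨c, hc⟩ := h
  have hb : b = a + m * c := by linarith
  rw [hb, E_add, E_mul_self, mul_one]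

lemma E_eq_of_zmod {m : ℕ} {a b : ℤ} (h : (a : ZMod m) = b) : E m a = E m b := by
  refine E_congr ?_
  have := (ZMod.intCast_eq_intCast_iff a b m).mp h
  exact Int.ModEq.dvd this

lemma E_nat_congr {m : ℕ} {a b : ℕ} (h : a ≡ b [MOD m]) : E m a = E m b := by
  refine E_congr ?_
  exact (Nat.modEq_iff_dvd).mp h

lemma E_pow (m : ℕ) (k : ℤ) (j : ℕ) : E m k ^ j = E m (k * j) := by
  induction j with
  | zero => simp [E_zero]
  | succ j ih =>
      rw [pow_succ, ih, ← E_add]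
      congr 1
      push_cast
      ring

lemma E_ne_one {m : ℕ} (hm : 0 < m) {c : ℤ} (h : ¬ ((m:ℤ) ∣ c)) : E m c ≠ 1 := by
  intro hE
  unfold E expu at hE
  rw [Complex.exp_eq_one_iff] at hE
  obtain ⟨k, hk⟩ := hE
  have h2 : (2 * (Real.pi:ℂ) * Complex.I) ≠ 0 := by
    simp [Real.pi_ne_zero, Complex.I_ne_zero]
  have hck : ((c:ℂ)/(m:ℂ)) = (k : ℂ) := by
    refine mul_left_cancel₀ h2 ?_
    push_cast at hk
    rw [hk]
    ring
  have hre : (c:ℝ)/(m:ℝ) = (k:ℝ) := by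
    exact_mod_cast hck
  have hmne : (m:ℝ) ≠ 0 := by positivity
  have : (c:ℝ) = (k:ℝ) * (m:ℝ) := by
    field_simp at hre
    linarith
  have : (c:ℤ) = k * m := by exact_mod_cast this
  exact h ⟨k, by linarith⟩

lemma E_geom {m : ℕ} (hm : 0 < m) (c : ℤ) :
    ∑ j ∈ Finset.range m, E m (c * j) = if (m:ℤ) ∣ c then (m : ℂ) else 0 := by
  by_cases h : (m:ℤ) ∣ c
  · rw [if_pos h]
    obtain ⟨e, he⟩ := h
    have : ∀ j ∈ Finset.range m, E m (c * j) = 1 := by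
      intro j _
      rw [he]
      have : (m : ℤ) * e * (j:ℤ) = (m:ℤ) * (e * j) := by ring
      rw [this, E_mul_self]
    rw [Finset.sum_congr rfl this]
    simp
  · rw [if_neg h]
    have hne : E m c ≠ 1 := E_ne_one hm h
    have hterm : ∀ j ∈ Finset.range m, E m (c * j) = (E m c) ^ j := by
      intro j _; rw [E_pow]
    rw [Finset.sum_congr rfl hterm, geom_sum_eq hne]
    rw [E_pow]
    have : (c * m : ℤ) = (m:ℤ) * c := by ring
    rw [this, E_mul_self]
    simp

lemma E_sum {ι : Type*} (s : Finset ι) (m : ℕ) (f : ι → ℤ) :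
    E m (∑ i ∈ s, f i) = ∏ i ∈ s, E m (f i) := by
  classical
  induction s using Finset.cons_induction with
  | empty => simp [E_zero]
  | cons a s ha ih =>
      rw [Finset.sum_cons, Finset.prod_cons, E_add, ih]

lemma E_cancel {g : ℕ} (hg : 0 < g) (d : ℕ) (a : ℤ) : E (g * d) (g * a) = E d a := by
  unfold E
  congr 1
  rcases Nat.eq_zero_or_pos d with h | h
  · subst h; simp
  · have hg' : (g:ℝ) ≠ 0 := by positivity
    have hd' : (d:ℝ) ≠ 0 := by positivity
    push_cast
    field_simp

/-- gam of a block decomposition -/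
lemma gam_blocks (g d r : ℕ) (hd : 0 < d) (x : Fin (g * d) → Fin r) :
    gam x ≡ ∑ k : Fin g, gam (fun i => x (finProdFinEquiv (k, i))) [MOD d] := by
  rw [← ZMod.natCast_eq_natCast_iff]
  push_cast
  unfold gam
  push_cast
  rw [← Equiv.sum_comp (finProdFinEquiv : Fin g × Fin d ≃ Fin (g * d))]
  rw [Fintype.sum_prod_type]
  refine Finset.sum_congr rfl (fun k _ => Finset.sum_congr rfl (fun i _ => ?_))
  have hval : ((finProdFinEquiv (k, i) : Fin (g*d)) : ℕ) = (i : ℕ) + d * (k : ℕ) := by simp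
  by_cases h1 : (i : ℕ) + 1 < d
  · have hlt : ((finProdFinEquiv (k, i) : Fin (g*d)) : ℕ) + 1 < g * d := by
      rw [hval]
      have hk : (k : ℕ) + 1 ≤ g := k.isLt
      calc (i : ℕ) + d * (k : ℕ) + 1 < d + d * (k:ℕ) := by omega
        _ = d * ((k:ℕ) + 1) := by ring
        _ ≤ d * g := Nat.mul_le_mul_left d hk
        _ = g * d := Nat.mul_comm d g
    rw [dif_pos hlt, dif_pos h1]
    have harg : (⟨((finProdFinEquiv (k, i) : Fin (g*d)) : ℕ) + 1, hlt⟩ : Fin (g*d))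
        = finProdFinEquiv (k, (⟨(i:ℕ)+1, h1⟩ : Fin d)) := by
      apply Fin.ext
      simp only [hval, finProdFinEquiv_apply_val]
      omega
    rw [harg]
    by_cases h2 : (x (finProdFinEquiv (k, (⟨(i:ℕ)+1, h1⟩ : Fin d))) : ℕ)
        < (x (finProdFinEquiv (k, i)) : ℕ)
    · rw [if_pos h2, if_pos h2]
      push_cast [hval]
      simp [ZMod.natCast_self]
    · rw [if_neg h2, if_neg h2]
  · rw [dif_neg h1]
    have hieq : (i : ℕ) + 1 = d := by omega
    by_cases hlt : ((finProdFinEquiv (k, i) : Fin (g*d)) : ℕ) + 1 < g * d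
    · rw [dif_pos hlt]
      by_cases h2 : (x ⟨((finProdFinEquiv (k, i) : Fin (g*d)) : ℕ) + 1, hlt⟩ : ℕ)
          < (x (finProdFinEquiv (k, i)) : ℕ)
      · rw [if_pos h2]
        have hdk : d * ((k:ℕ) + 1) = d * (k:ℕ) + d := by ring
        have : ((finProdFinEquiv (k, i) : Fin (g*d)) : ℕ) + 1 = d * ((k:ℕ) + 1) := by
          rw [hval]; omega
        rw [this]
        push_cast
        simp [ZMod.natCast_self]
      · rw [if_neg h2]
    · rw [dif_neg hlt]

lemma sig_blocks (g d r : ℕ) (x : Fin (g * d) → Fin r) :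
    sig x = ∑ k : Fin g, sig (fun i => x (finProdFinEquiv (k, i))) := by
  unfold sig
  rw [← Equiv.sum_comp (finProdFinEquiv : Fin g × Fin d ≃ Fin (g * d))]
  rw [Fintype.sum_prod_type]

section Rotation

variable {d r : ℕ} [NeZero d]

/-- cyclic rotation of a block -/
def rot (u : Fin d → Fin r) : Fin d → Fin r := fun i => u (i + 1)

/-- number of cyclic descents -/
noncomputable def dsc (u : Fin d → Fin r) : ℕ :=
  ∑ i : Fin d, if (u (i + 1) : ℕ) < (u i : ℕ) then 1 else 0

/-- cyclic weighted descent statistic -/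
noncomputable def gamc (u : Fin d → Fin r) : ℕ :=
  ∑ i : Fin d, ((i : ℕ) + 1) * (if (u (i + 1) : ℕ) < (u i : ℕ) then 1 else 0)

lemma sig_rot (u : Fin d → Fin r) : sig (rot u) = sig u := by
  unfold sig rot
  exact Equiv.sum_comp (Equiv.addRight (1 : Fin d)) (fun j => ((u j : ℕ)))

lemma dsc_rot (u : Fin d → Fin r) : dsc (rot u) = dsc u := by
  unfold dsc rot
  exact Equiv.sum_comp (Equiv.addRight (1 : Fin d))
    (fun j => if (u (j + 1) : ℕ) < (u j : ℕ) then 1 else 0)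

lemma fin_add_one_eq {i : Fin d} (h1 : (i:ℕ) + 1 < d) : (i + (1:Fin d)) = ⟨(i:ℕ)+1, h1⟩ := by
  apply Fin.ext
  rw [Fin.add_def, Fin.val_one']
  have h2 : 1 % d = 1 := Nat.mod_eq_of_lt (by omega)
  rw [h2]
  exact Nat.mod_eq_of_lt h1

lemma gam_eq_gamc (u : Fin d → Fin r) :
    ((gam u : ℕ) : ZMod d) = ((gamc u : ℕ) : ZMod d) := by
  unfold gam gamc
  rw [Nat.cast_sum, Nat.cast_sum]
  refine Finset.sum_congr rfl (fun i _ => ?_)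
  by_cases h1 : (i:ℕ) + 1 < d
  · rw [dif_pos h1, fin_add_one_eq h1]
    by_cases h2 : (u (⟨(i:ℕ)+1, h1⟩ : Fin d) : ℕ) < (u i : ℕ)
    · rw [if_pos h2, if_pos h2, mul_one]
    · rw [if_neg h2, if_neg h2, mul_zero]
  · rw [dif_neg h1]
    have hieq : (i:ℕ) + 1 = d := by have := i.isLt; omega
    have h0 : (((i:ℕ)+1 : ℕ) : ZMod d) = 0 := by rw [hieq]; simp
    push_cast
    push_cast at h0
    rw [h0, zero_mul]

lemma zmod_sub_one_val (j : Fin d) (hd2 : 2 ≤ d) :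
    ((((j - 1 : Fin d) : ℕ) : ZMod d)) + 1 = (((j : ℕ) : ZMod d)) := by
  have hsub : ((j - 1 : Fin d) : ℕ) = (d - 1 + (j:ℕ)) % d := by
    rw [Fin.sub_def]
    congr 1
    rw [Fin.val_one']
    rw [Nat.mod_eq_of_lt (by omega : (1:ℕ) < d)]
  have hmod : ((j - 1 : Fin d) : ℕ) + 1 ≡ (j : ℕ) [MOD d] := by
    rw [hsub]
    calc (d - 1 + (j:ℕ)) % d + 1 ≡ (d - 1 + (j:ℕ)) + 1 [MOD d] :=
          Nat.ModEq.add_right 1 (Nat.mod_modEq _ _)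
      _ = (j:ℕ) + d := by omega
      _ ≡ (j:ℕ) + 0 [MOD d] := Nat.ModEq.add_left _ (Nat.modEq_zero_iff_dvd.mpr dvd_rfl)
      _ = (j:ℕ) := by omega
  have := (ZMod.natCast_eq_natCast_iff _ _ _).mpr hmod
  push_cast at this
  exact this

lemma gamc_rot (u : Fin d → Fin r) :
    ((gamc (rot u) : ℕ) : ZMod d) + ((dsc u : ℕ) : ZMod d) = ((gamc u : ℕ) : ZMod d) := by
  rcases Nat.lt_or_ge d 2 with hd1 | hd2
  · have hd : d = 1 := by have := NeZero.pos d; omega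
    subst hd
    exact Subsingleton.elim _ _
  unfold gamc dsc rot
  rw [Nat.cast_sum, Nat.cast_sum, Nat.cast_sum]
  have hre : ∑ i : Fin d, ((((i:ℕ)+1) * (if (u (i+1+1) : ℕ) < (u (i+1) : ℕ) then 1 else 0) : ℕ) : ZMod d)
      = ∑ j : Fin d, ((((j:ℕ)) : ZMod d)) * ((if (u (j+1) : ℕ) < (u j : ℕ) then (1:ℕ) else 0) : ZMod d) := by
    rw [← Equiv.sum_comp (Equiv.addRight (1 : Fin d))
      (fun j => ((((j:ℕ)) : ZMod d)) * ((if (u (j+1) : ℕ) < (u j : ℕ) then (1:ℕ) else 0) : ZMod d))]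
    refine Finset.sum_congr rfl (fun i _ => ?_)
    simp only [Equiv.coe_addRight]
    push_cast
    have h2 : (((i + (1:Fin d) : Fin d) : ℕ) : ZMod d) = (((i:ℕ) : ZMod d)) + 1 := by
      have := zmod_sub_one_val (j := i + 1) hd2
      rw [add_sub_cancel_right] at this
      rw [← this]
    rw [h2]
  rw [hre]
  rw [← Finset.sum_add_distrib]
  refine Finset.sum_congr rfl (fun j _ => ?_)
  push_cast
  ring

end Rotation

section PvalSec

variable {d r : ℕ} [NeZero d]

lemma E_rot (s' : ℕ) (u : Fin d → Fin r) :
    E d ((s' * gam (rot u) : ℕ)) = E d ((s' * gam u : ℕ)) * E d (-((s' * dsc u : ℕ))) := by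
  have hz : (((((s' * gam (rot u) : ℕ)) : ℤ)) : ZMod d)
      = (((((s' * gam u : ℕ) : ℤ) - ((s' * dsc u : ℕ) : ℤ) : ℤ)) : ZMod d) := by
    push_cast
    have h1 : ((gam (rot u) : ℕ) : ZMod d) = ((gamc (rot u) : ℕ) : ZMod d) := gam_eq_gamc _
    have h2 : ((gam u : ℕ) : ZMod d) = ((gamc u : ℕ) : ZMod d) := gam_eq_gamc _
    have h3 := gamc_rot u
    rw [h1, h2, ← h3]
    ring
  have h4 := E_eq_of_zmod (m := d) (a := ((s' * gam (rot u) : ℕ) : ℤ))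
    (b := ((s' * gam u : ℕ) : ℤ) - ((s' * dsc u : ℕ) : ℤ)) hz
  rw [h4, sub_eq_add_neg, E_add]

lemma dsc_iter (s : ℕ) (u : Fin d → Fin r) : dsc (rot^[s] u) = dsc u := by
  induction s with
  | zero => rfl
  | succ s ih => rw [Function.iterate_succ_apply', dsc_rot, ih]

lemma sig_iter (s : ℕ) (u : Fin d → Fin r) : sig (rot^[s] u) = sig u := by
  induction s with
  | zero => rfl
  | succ s ih => rw [Function.iterate_succ_apply', sig_rot, ih]

lemma E_iter (s' : ℕ) (u : Fin d → Fin r) (k : ℕ) :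
    E d ((s' * gam (rot^[k] u) : ℕ))
      = E d ((s' * gam u : ℕ)) * E d ((k : ℤ) * (-((s' * dsc u : ℕ)))) := by
  induction k with
  | zero => simp [E_zero]
  | succ k ih =>
      rw [Function.iterate_succ_apply', E_rot, ih, dsc_iter]
      rw [mul_assoc, ← E_add]
      congr 2
      push_cast
      ring

lemma rot_bijective : Function.Bijective (rot : (Fin d → Fin r) → (Fin d → Fin r)) := by
  constructor
  · intro u v huv
    funext i
    have := congrFun huv (i - 1)
    unfold rot at this
    rwa [sub_add_cancel] at this
  · intro u
    refine ⟨fun i => u (i - 1), ?_⟩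
    funext i
    unfold rot
    show u (i + 1 - 1) = u i
    rw [add_sub_cancel_right]

lemma dsc_lt (hr : 0 < r) (u : Fin d → Fin r) : dsc u < d := by
  by_contra hge
  push_neg at hge
  have hle : dsc u ≤ d := by
    unfold dsc
    calc ∑ i : Fin d, (if (u (i + 1) : ℕ) < (u i : ℕ) then 1 else 0)
        ≤ ∑ _i : Fin d, 1 := Finset.sum_le_sum (fun i _ => by split <;> omega)
      _ = d := by simp
  have heq : dsc u = d := le_antisymm hle hge
  -- all cyclic descents
  have hall : ∀ i : Fin d, (u (i + 1) : ℕ) < (u i : ℕ) := by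
    intro i
    by_contra hni
    have : dsc u < d := by
      unfold dsc
      calc ∑ i : Fin d, (if (u (i + 1) : ℕ) < (u i : ℕ) then 1 else 0)
          < ∑ _i : Fin d, 1 := by
            refine Finset.sum_lt_sum (fun j _ => by split <;> omega) ⟨i, Finset.mem_univ i, ?_⟩
            rw [if_neg hni]
            omega
        _ = d := by simp
    omega
  -- chain
  have hchain : ∀ k : ℕ, ∀ h : k < d, (u ⟨k, h⟩ : ℕ) + k ≤ (u ⟨0, NeZero.pos d⟩ : ℕ) := by
    intro k
    induction k with
    | zero => intro h; omega
    | succ k ih =>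
        intro h
        have hk : k < d := by omega
        have step := hall ⟨k, hk⟩
        rw [fin_add_one_eq (by exact h)] at step
        have step2 : (u ⟨k + 1, h⟩ : ℕ) < (u ⟨k, hk⟩ : ℕ) := step
        have := ih hk
        omega
  have h0 : (0 : Fin d) = ⟨0, NeZero.pos d⟩ := rfl
  have hd1 : d - 1 < d := by have := NeZero.pos d; omega
  have hlast := hchain (d - 1) hd1
  have hwrap := hall ⟨d - 1, hd1⟩
  have hw0 : (⟨d - 1, hd1⟩ : Fin d) + 1 = ⟨0, NeZero.pos d⟩ := by
    apply Fin.ext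
    rw [Fin.add_def, Fin.val_one']
    simp only []
    have := NeZero.pos d
    rcases Nat.eq_or_lt_of_le this with h1 | h2
    · have hd : d = 1 := by omega
      subst hd; rfl
    · have : 1 % d = 1 := Nat.mod_eq_of_lt h2
      rw [this]
      have : d - 1 + 1 = d := by omega
      rw [this, Nat.mod_self]
  rw [hw0] at hwrap
  have := NeZero.pos d
  omega

lemma dsc_zero_const (u : Fin d → Fin r) (h : dsc u = 0) : ∀ i : Fin d, u i = u ⟨0, NeZero.pos d⟩ := by
  have hasc : ∀ i : Fin d, (u i : ℕ) ≤ (u (i + 1) : ℕ) := by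
    intro i
    have := (Finset.sum_eq_zero_iff).mp h i (Finset.mem_univ i)
    by_contra hc
    push_neg at hc
    rw [if_pos hc] at this
    omega
  have hchain : ∀ k : ℕ, ∀ h1 : k < d, ∀ j : ℕ, ∀ hj : j ≤ k,
      (u ⟨j, lt_of_le_of_lt hj h1⟩ : ℕ) ≤ (u ⟨k, h1⟩ : ℕ) := by
    intro k
    induction k with
    | zero => intro h1 j hj; have : j = 0 := by omega
              subst this; exact le_refl _
    | succ k ih =>
        intro h1 j hj
        rcases Nat.eq_or_lt_of_le hj with he | hlt
        · subst he; exact le_refl _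
        · have hjk : j ≤ k := by omega
          have hk : k < d := by omega
          have step := hasc ⟨k, hk⟩
          rw [fin_add_one_eq (by exact h1)] at step
          exact le_trans (ih hk j hjk) step
  have hd1 : d - 1 < d := by have := NeZero.pos d; omega
  have hw0 : (⟨d - 1, hd1⟩ : Fin d) + 1 = ⟨0, NeZero.pos d⟩ := by
    apply Fin.ext
    rw [Fin.add_def, Fin.val_one']
    simp only []
    have := NeZero.pos d
    rcases Nat.eq_or_lt_of_le this with h1 | h2
    · have hd : d = 1 := by omega
      subst hd; rfl
    · have h3 : 1 % d = 1 := Nat.mod_eq_of_lt h2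
      rw [h3]
      have h4 : d - 1 + 1 = d := by omega
      rw [h4, Nat.mod_self]
  have hwrap := hasc ⟨d - 1, hd1⟩
  rw [hw0] at hwrap
  intro i
  have hi : (i : ℕ) < d := i.isLt
  have h1 : (u ⟨0, NeZero.pos d⟩ : ℕ) ≤ (u i : ℕ) := by
    have := hchain (i : ℕ) hi 0 (by omega)
    simpa using this
  have h2 : (u i : ℕ) ≤ (u ⟨d - 1, hd1⟩ : ℕ) := by
    have := hchain (d - 1) hd1 (i : ℕ) (by omega)
    simpa using this
  apply Fin.ext
  omega

lemma const_dsc_zero (u : Fin d → Fin r) (h : ∀ i : Fin d, u i = u ⟨0, NeZero.pos d⟩) :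
    dsc u = 0 := by
  unfold dsc
  refine Finset.sum_eq_zero (fun i _ => ?_)
  rw [h (i+1), h i]
  simp

lemma gam_const (u : Fin d → Fin r) (h : ∀ i : Fin d, u i = u ⟨0, NeZero.pos d⟩) :
    gam u = 0 := by
  unfold gam
  refine Finset.sum_eq_zero (fun i _ => ?_)
  by_cases h1 : (i:ℕ) + 1 < d
  · rw [dif_pos h1, h ⟨(i:ℕ)+1, h1⟩, h i]
    simp
  · rw [dif_neg h1]

lemma sig_const (u : Fin d → Fin r) (h : ∀ i : Fin d, u i = u ⟨0, NeZero.pos d⟩) :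
    sig u = d * (u ⟨0, NeZero.pos d⟩ : ℕ) := by
  unfold sig
  rw [Finset.sum_congr rfl (fun i _ => by rw [h i])]
  simp [mul_comm]

end PvalSec

lemma Pval (d r s' t : ℕ) (hd : 0 < d) (hr : 0 < r) (hco : Nat.Coprime s' d) :
    ∑ u : Fin d → Fin r, E d ((s' * gam u : ℕ)) * E r ((t * sig u : ℕ))
      = if r ∣ d * t then (r : ℂ) else 0 := by
  haveI : NeZero d := ⟨hd.ne'⟩
  set W : (Fin d → Fin r) → ℂ := fun u => E d ((s' * gam u : ℕ)) * E r ((t * sig u : ℕ)) with hW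
  have hdc : (d : ℂ) ≠ 0 := Nat.cast_ne_zero.mpr hd.ne'
  have key : (d:ℂ) * (∑ u : Fin d → Fin r, W u)
      = (d:ℂ) * (∑ u ∈ Finset.univ.filter
          (fun u : Fin d → Fin r => d ∣ s' * dsc u), W u) := by
    calc (d:ℂ) * (∑ u : Fin d → Fin r, W u)
        = ∑ _k ∈ Finset.range d, ∑ u : Fin d → Fin r, W u := by
          rw [Finset.sum_const, Finset.card_range, nsmul_eq_mul]
      _ = ∑ k ∈ Finset.range d, ∑ u : Fin d → Fin r, W (rot^[k] u) := by
          refine Finset.sum_congr rfl (fun k _ => ?_)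
          exact (Function.Bijective.sum_comp (rot_bijective.iterate k) W).symm
      _ = ∑ k ∈ Finset.range d, ∑ u : Fin d → Fin r,
            W u * E d ((-((s' * dsc u : ℕ))) * (k:ℤ)) := by
          refine Finset.sum_congr rfl (fun k _ => Finset.sum_congr rfl (fun u _ => ?_))
          rw [hW]
          simp only []
          rw [E_iter, sig_iter]
          have : ((k:ℤ) * (-((s' * dsc u : ℕ)))) = (-((s' * dsc u : ℕ))) * (k:ℤ) := by ring
          rw [this]
          ring
      _ = ∑ u : Fin d → Fin r, ∑ k ∈ Finset.range d,
            W u * E d ((-((s' * dsc u : ℕ))) * (k:ℤ)) := Finset.sum_comm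
      _ = ∑ u : Fin d → Fin r, W u * (if (d:ℤ) ∣ (-((s' * dsc u : ℕ))) then (d:ℂ) else 0) := by
          refine Finset.sum_congr rfl (fun u _ => ?_)
          rw [← Finset.mul_sum]
          congr 1
          exact E_geom hd _
      _ = ∑ u : Fin d → Fin r, (if d ∣ s' * dsc u then (d:ℂ) * W u else 0) := by
          refine Finset.sum_congr rfl (fun u _ => ?_)
          have hiff : ((d:ℤ) ∣ (-((s' * dsc u : ℕ)))) ↔ (d ∣ s' * dsc u) := by
            rw [dvd_neg]
            exact_mod_cast Int.natCast_dvd_natCast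
          by_cases hc : d ∣ s' * dsc u
          · rw [if_pos (hiff.mpr hc), if_pos hc]; ring
          · rw [if_neg (fun hx => hc (hiff.mp hx)), if_neg hc]; ring
      _ = (d:ℂ) * (∑ u ∈ Finset.univ.filter
          (fun u : Fin d → Fin r => d ∣ s' * dsc u), W u) := by
          rw [Finset.sum_filter, Finset.mul_sum]
          refine Finset.sum_congr rfl (fun u _ => ?_)
          by_cases hc : d ∣ s' * dsc u
          · rw [if_pos hc, if_pos hc]
          · rw [if_neg hc, if_neg hc, mul_zero]
  have hPfil : (∑ u : Fin d → Fin r, W u)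
      = ∑ u ∈ Finset.univ.filter (fun u : Fin d → Fin r => d ∣ s' * dsc u), W u :=
    mul_left_cancel₀ hdc key
  -- filter = constants
  have hfe : Finset.univ.filter (fun u : Fin d → Fin r => d ∣ s' * dsc u)
      = Finset.univ.filter (fun u : Fin d → Fin r => ∀ i, u i = u ⟨0, NeZero.pos d⟩) := by
    refine Finset.filter_congr (fun u _ => ?_)
    constructor
    · intro hdvd
      have h2 : d ∣ dsc u := Nat.Coprime.dvd_of_dvd_mul_left (hco.symm) hdvd
      have h3 : dsc u = 0 := Nat.eq_zero_of_dvd_of_lt h2 (dsc_lt hr u)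
      exact dsc_zero_const u h3
    · intro hconst
      rw [const_dsc_zero u hconst, mul_zero]
      exact dvd_zero d
  have hconstsum : (∑ u ∈ Finset.univ.filter
        (fun u : Fin d → Fin r => ∀ i, u i = u ⟨0, NeZero.pos d⟩), W u)
      = ∑ c : Fin r, E r ((t * (d * (c : ℕ)) : ℕ)) := by
    refine Finset.sum_nbij' (i := fun u => u ⟨0, NeZero.pos d⟩)
      (j := fun c => fun _ => c) ?_ ?_ ?_ ?_ ?_
    · intro u _; exact Finset.mem_univ _
    · intro c _
      refine Finset.mem_filter.mpr ⟨Finset.mem_univ _, fun i => rfl⟩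
    · intro u hu
      have hc := (Finset.mem_filter.mp hu).2
      funext i
      exact (hc i).symm
    · intro c _; rfl
    · intro u hu
      have hc := (Finset.mem_filter.mp hu).2
      rw [hW]
      simp only []
      rw [gam_const u hc, sig_const u hc, Nat.mul_zero]
      have : E d ((0 : ℕ)) = 1 := by
        rw [Nat.cast_zero, E_zero]
      rw [this, one_mul]
  rw [hPfil, hfe, hconstsum]
  rw [Fin.sum_univ_eq_sum_range (fun c : ℕ => E r ((t * (d * c) : ℕ))) r]
  have hterm : ∀ c ∈ Finset.range r, E r ((t * (d * c) : ℕ)) = E r (((d * t : ℕ) : ℤ) * (c:ℤ)) := by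
    intro c _
    congr 1
    push_cast
    ring
  rw [Finset.sum_congr rfl hterm, E_geom hr ((d * t : ℕ) : ℤ)]
  by_cases hdvd : r ∣ d * t
  · rw [if_pos (Int.natCast_dvd_natCast.mpr hdvd), if_pos hdvd]
  · rw [if_neg (fun hx => hdvd (Int.natCast_dvd_natCast.mp hx)), if_neg hdvd]

lemma key' (g d r s' t : ℕ) (hd : 0 < d) (hg : 0 < g) (hr : 0 < r) (hco : Nat.Coprime s' d) :
    ∑ x : Fin (g * d) → Fin r, E (g * d) ((g * s' * gam x : ℕ)) * E r ((t * sig x : ℕ))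
      = if r ∣ d * t then ((r : ℂ)) ^ g else 0 := by
  haveI : NeZero d := ⟨hd.ne'⟩
  have hblk : ∀ x : Fin (g * d) → Fin r,
      E (g * d) ((g * s' * gam x : ℕ)) * E r ((t * sig x : ℕ))
        = ∏ k : Fin g, (E d ((s' * gam (fun i => x (finProdFinEquiv (k, i))) : ℕ))
            * E r ((t * sig (fun i => x (finProdFinEquiv (k, i))) : ℕ))) := by
    intro x
    have hA : E (g * d) ((g * s' * gam x : ℕ)) = E d ((s' * gam x : ℕ)) := by
      have : ((g * s' * gam x : ℕ) : ℤ) = (g : ℤ) * ((s' * gam x : ℕ) : ℤ) := by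
        push_cast; ring
      rw [this, E_cancel hg]
    have hB : E d ((s' * gam x : ℕ))
        = ∏ k : Fin g, E d ((s' * gam (fun i => x (finProdFinEquiv (k, i))) : ℕ)) := by
      have hmod := gam_blocks g d r hd x
      have hmod2 : s' * gam x ≡ s' * ∑ k : Fin g, gam (fun i => x (finProdFinEquiv (k, i))) [MOD d] :=
        Nat.ModEq.mul_left s' hmod
      rw [E_nat_congr hmod2]
      rw [Finset.mul_sum]
      have : ((∑ k : Fin g, s' * gam (fun i => x (finProdFinEquiv (k, i))) : ℕ) : ℤ)
          = ∑ k : Fin g, ((s' * gam (fun i => x (finProdFinEquiv (k, i))) : ℕ) : ℤ) := by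
        push_cast; rfl
      rw [this, E_sum]
    have hC : E r ((t * sig x : ℕ))
        = ∏ k : Fin g, E r ((t * sig (fun i => x (finProdFinEquiv (k, i))) : ℕ)) := by
      rw [sig_blocks g d r x, Finset.mul_sum]
      have : ((∑ k : Fin g, t * sig (fun i => x (finProdFinEquiv (k, i))) : ℕ) : ℤ)
          = ∑ k : Fin g, ((t * sig (fun i => x (finProdFinEquiv (k, i))) : ℕ) : ℤ) := by
        push_cast; rfl
      rw [this, E_sum]
    rw [hA, hB, hC, ← Finset.prod_mul_distrib]
  rw [Finset.sum_congr rfl (fun x _ => hblk x)]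
  -- reindex by blocks
  have hre : ∑ x : Fin (g * d) → Fin r, ∏ k : Fin g,
        (E d ((s' * gam (fun i => x (finProdFinEquiv (k, i))) : ℕ))
          * E r ((t * sig (fun i => x (finProdFinEquiv (k, i))) : ℕ)))
      = ∑ v : Fin g → Fin d → Fin r, ∏ k : Fin g,
        (E d ((s' * gam (v k) : ℕ)) * E r ((t * sig (v k) : ℕ))) := by
    refine Finset.sum_nbij'
      (i := fun x => fun k => fun i => x (finProdFinEquiv (k, i)))
      (j := fun v => fun p => v (finProdFinEquiv.symm p).1 (finProdFinEquiv.symm p).2)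
      (fun _ _ => Finset.mem_univ _) (fun _ _ => Finset.mem_univ _) ?_ ?_ ?_
    · intro x _
      funext p
      show x (finProdFinEquiv ((finProdFinEquiv.symm p).1, (finProdFinEquiv.symm p).2)) = x p
      rw [Prod.mk.eta, Equiv.apply_symm_apply]
    · intro v _
      funext k i
      simp
    · intro x _
      rfl
  rw [hre]
  have hps := Finset.prod_univ_sum (t := fun _ : Fin g => (Finset.univ : Finset (Fin d → Fin r)))
    (f := fun _ u => E d ((s' * gam u : ℕ)) * E r ((t * sig u : ℕ)))
  rw [Fintype.piFinset_univ] at hps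
  rw [← hps]
  rw [Finset.prod_congr rfl (fun (k : Fin g) _ => Pval d r s' t hd hr hco)]
  rw [Finset.prod_const, Finset.card_univ, Fintype.card_fin]
  by_cases hdvd : r ∣ d * t
  · rw [if_pos hdvd, if_pos hdvd]
  · rw [if_neg hdvd, if_neg hdvd, zero_pow hg.ne']

lemma key (n r s t : ℕ) (hn : 0 < n) (hr : 0 < r) :
    ∑ x : Fin n → Fin r, E n ((s * gam x : ℕ)) * E r ((t * sig x : ℕ))
      = if r ∣ (n / Nat.gcd s n) * t then ((r : ℂ)) ^ (Nat.gcd s n) else 0 := by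
  obtain ⟨g, hg⟩ : ∃ k, Nat.gcd s n = k := ⟨_, rfl⟩
  have hgpos : 0 < g := hg ▸ Nat.gcd_pos_of_pos_right s hn
  obtain ⟨d, hdd⟩ : ∃ k, n / g = k := ⟨_, rfl⟩
  have hgdvd : g ∣ n := hg ▸ Nat.gcd_dvd_right s n
  have hnd : n = g * d := by rw [← hdd, Nat.mul_div_cancel' hgdvd]
  obtain ⟨s', hs'⟩ : ∃ k, s / g = k := ⟨_, rfl⟩
  have hsdvd : g ∣ s := hg ▸ Nat.gcd_dvd_left s n
  have hss : s = g * s' := by rw [← hs', Nat.mul_div_cancel' hsdvd]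
  have hdpos : 0 < d := by
    rcases Nat.eq_zero_or_pos d with h | h
    · exfalso; rw [hnd, h, Nat.mul_zero] at hn; omega
    · exact h
  have hco : Nat.Coprime s' d := by
    have := Nat.coprime_div_gcd_div_gcd (m := s) (n := n) (hg ▸ hgpos)
    rwa [hg, hs', hdd] at this
  rw [hg, hdd]
  subst hnd
  simp only [hss]
  exact key' g d r s' t hdpos hgpos hr hco

lemma orth (m : ℕ) (hm : 0 < m) (a b : ℕ) :
    ∑ s ∈ Finset.range m, E m ((s : ℤ) * ((a:ℤ) - (b:ℤ)))
      = if a ≡ b [MOD m] then (m:ℂ) else 0 := by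
  have h1 : ∀ s ∈ Finset.range m, E m ((s:ℤ) * ((a:ℤ) - (b:ℤ)))
      = E m (((a:ℤ) - (b:ℤ)) * (s:ℤ)) := by
    intro s _; rw [mul_comm]
  rw [Finset.sum_congr rfl h1, E_geom hm]
  have : ((m:ℤ) ∣ (a:ℤ) - (b:ℤ)) ↔ a ≡ b [MOD m] := by
    rw [Nat.modEq_iff_dvd, dvd_sub_comm]
  by_cases hc : a ≡ b [MOD m]
  · rw [if_pos (this.mpr hc), if_pos hc]
  · rw [if_neg (fun hx => hc (this.mp hx)), if_neg hc]

lemma dvd_iff_div_gcd (r dd t : ℕ) (hr : 0 < r) :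
    r ∣ dd * t ↔ (r / Nat.gcd r dd) ∣ t := by
  set g' := Nat.gcd r dd with hg'
  have hg'pos : 0 < g' := Nat.gcd_pos_of_pos_left dd hr
  have hr1 : r = g' * (r / g') := (Nat.mul_div_cancel' (Nat.gcd_dvd_left r dd)).symm
  have hd1 : dd = g' * (dd / g') := (Nat.mul_div_cancel' (Nat.gcd_dvd_right r dd)).symm
  have hco : (r / g').Coprime (dd / g') := Nat.coprime_div_gcd_div_gcd hg'pos
  constructor
  · intro h
    have h2 : g' * (r / g') ∣ g' * ((dd / g') * t) := by
      rw [← hr1]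
      have : g' * ((dd / g') * t) = dd * t := by rw [← Nat.mul_assoc, ← hd1]
      rw [this]
      exact h
    have h3 : (r / g') ∣ (dd / g') * t := (Nat.mul_dvd_mul_iff_left hg'pos).mp h2
    exact Nat.Coprime.dvd_of_dvd_mul_left hco h3
  · intro h
    have h2 : r ∣ (g' * t) := by
      rw [hr1]
      exact Nat.mul_dvd_mul_left g' h
    calc r ∣ g' * t := h2
      _ ∣ dd * t := by
          refine Nat.mul_dvd_mul_right ?_ t
          exact Nat.gcd_dvd_right r dd

lemma Phi0 (r dd a : ℕ) (hr : 0 < r) :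
    ∑ t ∈ (Finset.range r).filter (fun t => r ∣ dd * t), E r (-((t * a : ℕ) : ℤ))
      = (Nat.gcd r dd : ℂ) * (if Nat.gcd r dd ∣ a then 1 else 0) := by
  set g' := Nat.gcd r dd with hg'
  have hg'pos : 0 < g' := Nat.gcd_pos_of_pos_left dd hr
  set r₁ := r / g' with hr₁
  have hrfac : r = r₁ * g' := (Nat.div_mul_cancel (Nat.gcd_dvd_left r dd)).symm
  have hr₁pos : 0 < r₁ := by
    rcases Nat.eq_zero_or_pos r₁ with h | h
    · exfalso; rw [hrfac, h, Nat.zero_mul] at hr; omega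
    · exact h
  have hfc : (Finset.range r).filter (fun t => r ∣ dd * t)
      = (Finset.range r).filter (fun t => r₁ ∣ t) := by
    refine Finset.filter_congr (fun t _ => ?_)
    constructor
    · intro h; exact (dvd_iff_div_gcd r dd t hr).mp h
    · intro h; exact (dvd_iff_div_gcd r dd t hr).mpr h
  rw [hfc]
  have hstep : ∑ t ∈ (Finset.range r).filter (fun t => r₁ ∣ t), E r (-((t * a : ℕ) : ℤ))
      = ∑ k ∈ Finset.range g', E g' (-((k * a : ℕ) : ℤ)) := by
    refine Finset.sum_nbij' (i := fun t => t / r₁) (j := fun k => r₁ * k) ?_ ?_ ?_ ?_ ?_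
    · intro t ht
      obtain ⟨ht1, ht2⟩ := Finset.mem_filter.mp ht
      rw [Finset.mem_range] at ht1 ⊢
      obtain ⟨c, hc⟩ := ht2
      subst hc
      rw [Nat.mul_div_cancel_left c hr₁pos]
      rw [hrfac] at ht1
      exact lt_of_mul_lt_mul_left ht1 (Nat.zero_le r₁)
    · intro k hk
      rw [Finset.mem_range] at hk
      refine Finset.mem_filter.mpr ⟨?_, Dvd.intro k rfl⟩
      rw [Finset.mem_range, hrfac]
      exact Nat.mul_lt_mul_left hr₁pos |>.mpr hk
    · intro t ht
      obtain ⟨_, ht2⟩ := Finset.mem_filter.mp ht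
      exact Nat.mul_div_cancel' ht2
    · intro k _
      exact Nat.mul_div_cancel_left k hr₁pos
    · intro t ht
      obtain ⟨_, ht2⟩ := Finset.mem_filter.mp ht
      obtain ⟨c, hc⟩ := ht2
      subst hc
      rw [Nat.mul_div_cancel_left c hr₁pos]
      have harg : (-(((r₁ * c) * a : ℕ) : ℤ)) = (r₁ : ℤ) * (-((c * a : ℕ) : ℤ)) := by
        push_cast; ring
      rw [harg, hrfac, E_cancel hr₁pos]
  rw [hstep]
  have hterm : ∀ k ∈ Finset.range g', E g' (-((k * a : ℕ) : ℤ)) = E g' ((-(a:ℤ)) * (k:ℤ)) := by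
    intro k _
    congr 1
    push_cast
    ring
  rw [Finset.sum_congr rfl hterm, E_geom hg'pos]
  have hdvd : ((g' : ℤ) ∣ -(a:ℤ)) ↔ g' ∣ a := by
    rw [dvd_neg]
    exact Int.natCast_dvd_natCast
  by_cases hc : g' ∣ a
  · rw [if_pos (hdvd.mpr hc), if_pos hc, mul_one]
  · rw [if_neg (fun hx => hc (hdvd.mp hx)), if_neg hc, mul_zero]

lemma gcd_sub_eq (d j : ℕ) (hj : j ≤ d) : Nat.gcd (d - j) d = Nat.gcd j d := by
  apply Nat.dvd_antisymm
  · apply Nat.dvd_gcd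
    · have h1 := Nat.dvd_sub (Nat.gcd_dvd_right (d - j) d) (Nat.gcd_dvd_left (d - j) d)
      have : d - (d - j) = j := by omega
      rwa [this] at h1
    · exact Nat.gcd_dvd_right _ _
  · apply Nat.dvd_gcd
    · exact Nat.dvd_sub (Nat.gcd_dvd_right j d) (Nat.gcd_dvd_left j d)
    · exact Nat.gcd_dvd_right _ _

lemma ram_fiber (n d a : ℕ) (hn : 0 < n) (hd : d ∣ n) :
    ∑ s ∈ (Finset.range n).filter (fun s => n / Nat.gcd s n = d),
        E n (-((s * a : ℕ) : ℤ)) = ramanujan d a := by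
  have hdpos : 0 < d := Nat.pos_of_dvd_of_pos hd hn
  set q := n / d with hq
  have hnq : n = q * d := (Nat.div_mul_cancel hd).symm
  have hqpos : 0 < q := by
    rcases Nat.eq_zero_or_pos q with h | h
    · exfalso; rw [hnq, h, Nat.zero_mul] at hn; omega
    · exact h
  have hqd : q ∣ n := ⟨d, hnq⟩
  -- step 1 : fiber → coprime residues
  have hstep1 : ∑ s ∈ (Finset.range n).filter (fun s => n / Nat.gcd s n = d),
        E n (-((s * a : ℕ) : ℤ))
      = ∑ j ∈ (Finset.range d).filter (fun j => Nat.gcd j d = 1), E d (-((j * a : ℕ) : ℤ)) := by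
    have hgcd_eq : ∀ s, s ∈ (Finset.range n).filter (fun s => n / Nat.gcd s n = d)
        → Nat.gcd s n = q := by
      intro s hs
      obtain ⟨_, hs2⟩ := Finset.mem_filter.mp hs
      have hgd : Nat.gcd s n ∣ n := Nat.gcd_dvd_right s n
      rw [hq, ← hs2]
      exact (Nat.div_div_self hgd hn.ne').symm
    refine Finset.sum_nbij' (i := fun s => s / q) (j := fun j => q * j) ?_ ?_ ?_ ?_ ?_
    · intro s hs
      have hgs := hgcd_eq s hs
      obtain ⟨hs1, hs2⟩ := Finset.mem_filter.mp hs
      rw [Finset.mem_range] at hs1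
      have hqs : q ∣ s := hgs ▸ Nat.gcd_dvd_left s n
      obtain ⟨j, hj⟩ := hqs
      refine Finset.mem_filter.mpr ⟨?_, ?_⟩
      · rw [Finset.mem_range, hj, Nat.mul_div_cancel_left j hqpos]
        rw [hnq, hj] at hs1
        exact lt_of_mul_lt_mul_left hs1 (Nat.zero_le q)
      · rw [hj, Nat.mul_div_cancel_left j hqpos]
        rw [hj, hnq, Nat.gcd_mul_left] at hgs
        have : q * Nat.gcd j d = q * 1 := by rw [Nat.mul_one]; exact hgs
        exact Nat.eq_of_mul_eq_mul_left hqpos this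
    · intro j hj
      obtain ⟨hj1, hj2⟩ := Finset.mem_filter.mp hj
      rw [Finset.mem_range] at hj1
      refine Finset.mem_filter.mpr ⟨?_, ?_⟩
      · rw [Finset.mem_range, hnq]
        exact Nat.mul_lt_mul_left hqpos |>.mpr hj1
      · rw [hnq, Nat.gcd_mul_left, hj2, Nat.mul_one, Nat.mul_div_cancel_left d hqpos]
    · intro s hs
      have hgs := hgcd_eq s hs
      have hqs : q ∣ s := hgs ▸ Nat.gcd_dvd_left s n
      exact Nat.mul_div_cancel' hqs
    · intro j _
      exact Nat.mul_div_cancel_left j hqpos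
    · intro s hs
      have hgs := hgcd_eq s hs
      have hqs : q ∣ s := hgs ▸ Nat.gcd_dvd_left s n
      obtain ⟨j, hj⟩ := hqs
      subst hj
      rw [Nat.mul_div_cancel_left j hqpos]
      have harg : (-(((q * j) * a : ℕ) : ℤ)) = (q : ℤ) * (-((j * a : ℕ) : ℤ)) := by
        push_cast; ring
      rw [harg, hnq, E_cancel hqpos]
  rw [hstep1]
  -- step 2 : reflection
  unfold ramanujan
  refine Finset.sum_nbij' (i := fun j => d - j) (j := fun j => d - j) ?_ ?_ ?_ ?_ ?_
  · intro j hj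
    obtain ⟨hj1, hj2⟩ := Finset.mem_filter.mp hj
    rw [Finset.mem_range] at hj1
    refine Finset.mem_filter.mpr ⟨?_, ?_⟩
    · rw [Finset.mem_Icc]
      omega
    · rw [gcd_sub_eq d j (by omega)]
      exact hj2
  · intro j hj
    obtain ⟨hj1, hj2⟩ := Finset.mem_filter.mp hj
    rw [Finset.mem_Icc] at hj1
    refine Finset.mem_filter.mpr ⟨?_, ?_⟩
    · rw [Finset.mem_range]
      omega
    · rw [gcd_sub_eq d j (by omega)]
      exact hj2
  · intro j hj
    obtain ⟨hj1, _⟩ := Finset.mem_filter.mp hj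
    rw [Finset.mem_range] at hj1
    omega
  · intro j hj
    obtain ⟨hj1, _⟩ := Finset.mem_filter.mp hj
    rw [Finset.mem_Icc] at hj1
    omega
  · intro j hj
    obtain ⟨hj1, _⟩ := Finset.mem_filter.mp hj
    rw [Finset.mem_range] at hj1
    have hjle : j ≤ d := by omega
    have hE : E d (-((j * a : ℕ) : ℤ)) = E d (((a * (d - j) : ℕ) : ℤ)) := by
      refine E_eq_of_zmod ?_
      push_cast [Nat.cast_sub hjle]
      simp [ZMod.natCast_self]
      ring
    rw [hE]
    unfold E expu
    congr 2
    push_cast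
    ring

theorem stmt_5 (n r : ℕ) (hn : 0 < n) (hr : 0 < r)
    (a₁ a₂ : ℕ) (ha₁ : a₁ < n) (ha₂ : a₂ < r) :
    ((Finset.univ.filter
        (fun x : Fin n → Fin r => gam x ≡ a₁ [MOD n] ∧ sig x ≡ a₂ [MOD r])).card : ℂ)
    = (1 / ((n : ℂ) * (r : ℂ))) *
        ∑ d ∈ Finset.Icc 1 n,
          ramanujan d a₁ * (r : ℂ) ^ (n / d) * (Nat.gcd r d : ℂ) *
            (if d ∣ n then 1 else 0) * (if Nat.gcd r d ∣ a₂ then 1 else 0) := by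
  have hn0 : (n : ℂ) ≠ 0 := Nat.cast_ne_zero.mpr hn.ne'
  have hr0 : (r : ℂ) ≠ 0 := Nat.cast_ne_zero.mpr hr.ne'
  set N : ℂ := ((Finset.univ.filter
      (fun x : Fin n → Fin r => gam x ≡ a₁ [MOD n] ∧ sig x ≡ a₂ [MOD r])).card : ℂ) with hN
  set A : ℂ := ∑ s ∈ Finset.range n, ∑ t ∈ Finset.range r,
      (E n (-((s * a₁ : ℕ) : ℤ)) * E r (-((t * a₂ : ℕ) : ℤ))) *
        ∑ x : Fin n → Fin r, E n ((s * gam x : ℕ)) * E r ((t * sig x : ℕ)) with hA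
  -- First evaluation : A = n r N
  have hA1 : A = (n:ℂ) * (r:ℂ) * N := by
    rw [hA]
    have step1 : ∀ s ∈ Finset.range n, ∀ t ∈ Finset.range r,
        (E n (-((s * a₁ : ℕ) : ℤ)) * E r (-((t * a₂ : ℕ) : ℤ))) *
          (∑ x : Fin n → Fin r, E n ((s * gam x : ℕ)) * E r ((t * sig x : ℕ)))
        = ∑ x : Fin n → Fin r,
            E n ((s:ℤ) * ((gam x : ℤ) - (a₁:ℤ))) * E r ((t:ℤ) * ((sig x : ℤ) - (a₂:ℤ))) := by
      intro s _ t _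
      rw [Finset.mul_sum]
      refine Finset.sum_congr rfl (fun x _ => ?_)
      have e1 : E n ((s:ℤ) * ((gam x : ℤ) - (a₁:ℤ)))
          = E n ((s * gam x : ℕ)) * E n (-((s * a₁ : ℕ) : ℤ)) := by
        rw [← E_add]
        congr 1
        push_cast
        ring
      have e2 : E r ((t:ℤ) * ((sig x : ℤ) - (a₂:ℤ)))
          = E r ((t * sig x : ℕ)) * E r (-((t * a₂ : ℕ) : ℤ)) := by
        rw [← E_add]
        congr 1
        push_cast
        ring
      rw [e1, e2]
      ring
    rw [Finset.sum_congr rfl (fun s hs => Finset.sum_congr rfl (fun t ht => step1 s hs t ht))]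
    rw [Finset.sum_congr rfl (fun s _ => Finset.sum_comm)]
    rw [Finset.sum_comm]
    have step2 : ∀ x : Fin n → Fin r,
        (∑ s ∈ Finset.range n, ∑ t ∈ Finset.range r,
          E n ((s:ℤ) * ((gam x : ℤ) - (a₁:ℤ))) * E r ((t:ℤ) * ((sig x : ℤ) - (a₂:ℤ))))
        = (if gam x ≡ a₁ [MOD n] then (n:ℂ) else 0) *
            (if sig x ≡ a₂ [MOD r] then (r:ℂ) else 0) := by
      intro x
      rw [← Finset.sum_mul_sum, orth n hn, orth r hr]
    rw [Finset.sum_congr rfl (fun x _ => step2 x)]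
    have step3 : ∀ x : Fin n → Fin r,
        (if gam x ≡ a₁ [MOD n] then (n:ℂ) else 0) *
            (if sig x ≡ a₂ [MOD r] then (r:ℂ) else 0)
        = if (gam x ≡ a₁ [MOD n] ∧ sig x ≡ a₂ [MOD r]) then (n:ℂ) * (r:ℂ) else 0 := by
      intro x
      by_cases h1 : gam x ≡ a₁ [MOD n]
      · by_cases h2 : sig x ≡ a₂ [MOD r]
        · rw [if_pos h1, if_pos h2, if_pos ⟨h1, h2⟩]
        · rw [if_pos h1, if_neg h2, if_neg (fun hc => h2 hc.2), mul_zero]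
      · by_cases h2 : sig x ≡ a₂ [MOD r]
        · rw [if_neg h1, if_pos h2, if_neg (fun hc => h1 hc.1), zero_mul]
        · rw [if_neg h1, if_neg h2, if_neg (fun hc => h1 hc.1), zero_mul]
    rw [Finset.sum_congr rfl (fun x _ => step3 x)]
    rw [← Finset.sum_filter]
    rw [Finset.sum_const, nsmul_eq_mul, hN]
    ring
  -- Second evaluation : A = divisor sum
  have hA2 : A = ∑ d ∈ n.divisors,
      ramanujan d a₁ * (r:ℂ) ^ (n / d) * (Nat.gcd r d : ℂ) *
        (if Nat.gcd r d ∣ a₂ then 1 else 0) := by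
    rw [hA]
    have step1 : ∀ s ∈ Finset.range n,
        (∑ t ∈ Finset.range r,
          (E n (-((s * a₁ : ℕ) : ℤ)) * E r (-((t * a₂ : ℕ) : ℤ))) *
            ∑ x : Fin n → Fin r, E n ((s * gam x : ℕ)) * E r ((t * sig x : ℕ)))
        = E n (-((s * a₁ : ℕ) : ℤ)) * ((r:ℂ) ^ (Nat.gcd s n) *
            ((Nat.gcd r (n / Nat.gcd s n) : ℂ) *
              (if Nat.gcd r (n / Nat.gcd s n) ∣ a₂ then 1 else 0))) := by
      intro s _
      have hkey : ∀ t ∈ Finset.range r,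
          (E n (-((s * a₁ : ℕ) : ℤ)) * E r (-((t * a₂ : ℕ) : ℤ))) *
            (∑ x : Fin n → Fin r, E n ((s * gam x : ℕ)) * E r ((t * sig x : ℕ)))
          = E n (-((s * a₁ : ℕ) : ℤ)) *
              (if r ∣ (n / Nat.gcd s n) * t then
                E r (-((t * a₂ : ℕ) : ℤ)) * (r:ℂ) ^ (Nat.gcd s n) else 0) := by
        intro t _
        rw [key n r s t hn hr]
        by_cases hc : r ∣ (n / Nat.gcd s n) * t
        · rw [if_pos hc, if_pos hc]; ring
        · rw [if_neg hc, if_neg hc]; ring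
      rw [Finset.sum_congr rfl hkey, ← Finset.mul_sum]
      congr 1
      rw [← Finset.sum_filter]
      have : ∀ t ∈ (Finset.range r).filter (fun t => r ∣ (n / Nat.gcd s n) * t),
          E r (-((t * a₂ : ℕ) : ℤ)) * (r:ℂ) ^ (Nat.gcd s n)
          = (r:ℂ) ^ (Nat.gcd s n) * E r (-((t * a₂ : ℕ) : ℤ)) := by
        intro t _; ring
      rw [Finset.sum_congr rfl this, ← Finset.mul_sum]
      rw [Phi0 r (n / Nat.gcd s n) a₂ hr]
    rw [Finset.sum_congr rfl step1]
    have hmaps : ∀ s ∈ Finset.range n, n / Nat.gcd s n ∈ n.divisors := by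
      intro s _
      refine Nat.mem_divisors.mpr ⟨Nat.div_dvd_of_dvd (Nat.gcd_dvd_right s n), hn.ne'⟩
    rw [← Finset.sum_fiberwise_of_maps_to hmaps
      (fun s => E n (-((s * a₁ : ℕ) : ℤ)) * ((r:ℂ) ^ (Nat.gcd s n) *
        ((Nat.gcd r (n / Nat.gcd s n) : ℂ) *
          (if Nat.gcd r (n / Nat.gcd s n) ∣ a₂ then 1 else 0))))]
    refine Finset.sum_congr rfl (fun d hd => ?_)
    have hddvd : d ∣ n := (Nat.mem_divisors.mp hd).1
    have hfib : ∀ s ∈ (Finset.range n).filter (fun s => n / Nat.gcd s n = d),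
        E n (-((s * a₁ : ℕ) : ℤ)) * ((r:ℂ) ^ (Nat.gcd s n) *
          ((Nat.gcd r (n / Nat.gcd s n) : ℂ) *
            (if Nat.gcd r (n / Nat.gcd s n) ∣ a₂ then 1 else 0)))
        = E n (-((s * a₁ : ℕ) : ℤ)) * ((r:ℂ) ^ (n / d) *
            ((Nat.gcd r d : ℂ) * (if Nat.gcd r d ∣ a₂ then 1 else 0))) := by
      intro s hs
      obtain ⟨_, hs2⟩ := Finset.mem_filter.mp hs
      have hgs : Nat.gcd s n = n / d := by
        rw [← hs2]
        exact (Nat.div_div_self (Nat.gcd_dvd_right s n) hn.ne').symm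
      rw [hs2, hgs]
    rw [Finset.sum_congr rfl hfib, ← Finset.sum_mul, ram_fiber n d a₁ hn hddvd]
    ring
  -- combine
  have hIcc : ∑ d ∈ Finset.Icc 1 n,
      ramanujan d a₁ * (r : ℂ) ^ (n / d) * (Nat.gcd r d : ℂ) *
        (if d ∣ n then 1 else 0) * (if Nat.gcd r d ∣ a₂ then 1 else 0)
      = ∑ d ∈ n.divisors,
          ramanujan d a₁ * (r:ℂ) ^ (n / d) * (Nat.gcd r d : ℂ) *
            (if Nat.gcd r d ∣ a₂ then 1 else 0) := by
    have hdiv : n.divisors = (Finset.Icc 1 n).filter (fun d => d ∣ n) := by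
      rw [Nat.divisors]
      rw [Finset.Ico_add_one_right_eq_Icc]
    rw [hdiv, Finset.sum_filter]
    refine Finset.sum_congr rfl (fun d _ => ?_)
    by_cases hc : d ∣ n
    · rw [if_pos hc, if_pos hc, mul_one]
    · rw [if_neg hc, if_neg hc, mul_zero, zero_mul]
  rw [hIcc, ← hA2]
  rw [hA1]
  field_simp
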